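/- Let m, n be non-negative integers and let μ, ν be partitions with l(μ) ≤ m, μ_1 ≤ n and l(ν) ≤ n. Then the (m,n)-overlap μ ⋆_{m,n} ν equals the empty partition if and only if ν_1 ≤ m and ν'_i = n − μ_{m+1−i} for all 1 ≤ i ≤ m; that is, two partitions do not overlap precisely when one is (the conjugate of) the (n,m)-complement of the other in the rectangle ⟨n^m⟩. -/

import Mathlib

open scoped Classical

/-- `f : ℕ → ℕ` represents a partition via its parts `f 1 ≥ f 2 ≥ ⋯`
(indices start at `1`; we normalize the unused value at `0` by `f 0 = f 1`). -/
def IsPartition (f : ℕ → ℕ) : Prop :=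
  f 0 = f 1 ∧ (∀ i j, i ≤ j → f j ≤ f i) ∧ ∃ N, ∀ i, N ≤ i → f i = 0

/-- the partition `f` has length (number of positive parts) at most `r`,
i.e. `l(f) ≤ r`. -/
def LenLE (f : ℕ → ℕ) (r : ℕ) : Prop := ∀ i, r < i → f i = 0

/-- two partitions have the same parts. -/
def EqParts (f g : ℕ → ℕ) : Prop := ∀ i, 1 ≤ i → f i = g i

/-- normalize the value at the (unused) index `0`. -/
def pad (f : ℕ → ℕ) : ℕ → ℕ := fun i => if i = 0 then f 1 else f i

/-- the multiset `{f i + N - i : i = 1, …, N}`. -/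
def hooks (N : ℕ) (f : ℕ → ℕ) : Multiset ℕ :=
  (Multiset.range N).map (fun i => f (i + 1) + N - (i + 1))

/-- `lam` is the `(m,n)`-overlap of `mu` and `nu`, i.e. `mu ⋆_{m,n} nu = lam`:
`lam` is a partition of length at most `m + n` such that the sequence
`(lam i + (m+n) - i)_{i=1..m+n}` is a rearrangement of the concatenation of
`(mu i + m - i)_{i=1..m}` and `(nu j + n - j)_{j=1..n}`. -/
def IsOverlap (m n : ℕ) (mu nu lam : ℕ → ℕ) : Prop :=
  LenLE lam (m + n) ∧ hooks (m + n) lam = hooks m mu + hooks n nu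

/-- `mu ⋆_{m,n} nu = ∞`: the two hook sequences share a common value. -/
def OverlapInfinite (m n : ℕ) (mu nu : ℕ → ℕ) : Prop :=
  ∃ a, a ∈ hooks m mu ∧ a ∈ hooks n nu

/-- the sign `ε_{m,n}(mu, nu)` of the permutation sorting the concatenation of
`(mu i + m - i)_{i=1..m}` and `(nu j + n - j)_{j=1..n}` into strictly decreasing
order, computed as `(-1)` to the number of inversions. -/
def overlapSign (m n : ℕ) (mu nu : ℕ → ℕ) : ℤ :=
  (-1) ^ (((Finset.range m ×ˢ Finset.range n).filter (fun p =>
    mu (p.1 + 1) + m - (p.1 + 1) < nu (p.2 + 1) + n - (p.2 + 1))).card)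

/-- the truncation `(f_1, …, f_r)` of a partition. -/
def truncateP (f : ℕ → ℕ) (r : ℕ) : ℕ → ℕ := pad fun i => if i ≤ r then f i else 0

/-- `μ + ⟨k^l⟩ = (μ_1 + k, …, μ_l + k)`. -/
def addRect (mu : ℕ → ℕ) (k l : ℕ) : ℕ → ℕ := pad fun i => if i ≤ l then mu i + k else 0

/-- `μ − ⟨k^l⟩ = (μ_1 − k, …, μ_l − k)`. -/
def subRect (mu : ℕ → ℕ) (k l : ℕ) : ℕ → ℕ := pad fun i => if i ≤ l then mu i - k else 0

/-- `ν ∪ a`: `ν` regarded as a sequence of length `r`, with the sequence `a`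
appended after position `r`. -/
def concatSeq (nu : ℕ → ℕ) (r : ℕ) (tail : ℕ → ℕ) : ℕ → ℕ :=
  pad fun i => if i ≤ r then nu i else tail (i - r)

/-- the rectangular partition `⟨a^b⟩` (with `b` parts equal to `a`). -/
def rectP (a b : ℕ) : ℕ → ℕ := pad fun i => if i ≤ b then a else 0

/-- the `(m,n)`-complement `λ̃ = (m − λ_n, …, m − λ_1)` of a partition `λ ⊂ ⟨m^n⟩`. -/
def complSeq (m n : ℕ) (lam : ℕ → ℕ) : ℕ → ℕ :=
  pad fun i => if i ≤ n then m - lam (n + 1 - i) else 0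

noncomputable section

/-- the `i`-th part `λ'_i = #{j ≥ 1 : λ_j ≥ i}` of the conjugate partition. -/
def conjPart (f : ℕ → ℕ) (i : ℕ) : ℕ := {j : ℕ | 1 ≤ j ∧ i ≤ f j}.ncard

/-- the conjugate partition `λ'`. -/
def conjP (f : ℕ → ℕ) : ℕ → ℕ := pad fun i => conjPart f i

/-- the set of integers `k ≤ min{m,n}` with `λ_{n+1−k} ≤ m − k`. -/
def indexSet (m n : ℕ) (lam : ℕ → ℕ) : Set ℤ :=
  {k : ℤ | k ≤ min (m : ℤ) (n : ℤ) ∧ (lam ((n : ℤ) + 1 - k).toNat : ℤ) ≤ (m : ℤ) - k}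

/-- `k` is the `(m,n)`-index of `lam`: the largest integer `k ≤ min{m,n}`
with `λ_{n+1−k} ≤ m − k`. -/
def IsIndex (m n : ℕ) (lam : ℕ → ℕ) (k : ℤ) : Prop := IsGreatest (indexSet m n lam) k

/-- the `(m,n)`-index of `lam`. -/
def indexOf (m n : ℕ) (lam : ℕ → ℕ) : ℤ := sSup (indexSet m n lam)

variable {F : Type*} [Field F]

/-- `Δ(X) = ∏_{i<j} (X_i − X_j)`. -/
def vanDet {n : ℕ} (X : Fin n → F) : F :=
  ∏ i : Fin n, ∏ j : Fin n, if i < j then X i - X j else 1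

/-- `Δ(X; Y) = ∏_{x ∈ X, y ∈ Y} (x − y)`. -/
def vanPair {n m : ℕ} (X : Fin n → F) (Y : Fin m → F) : F :=
  ∏ i, ∏ j, (X i - Y j)

/-- the Schur function `s_λ(X)`. -/
def schur {n : ℕ} (lam : ℕ → ℕ) (X : Fin n → F) : F :=
  if LenLE lam n then
    (Matrix.of fun i j : Fin n =>
      X i ^ (lam ((j : ℕ) + 1) + n - ((j : ℕ) + 1))).det / vanDet X
  else 0

/-- the subsequence of `X` indexed by `I` (in increasing order of indices). -/
def subSeq {n : ℕ} (X : Fin n → F) (I : Finset (Fin n)) : Fin I.card → F :=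
  fun j => X (I.orderIsoOfFin rfl j).1

/-- the sign `ε(λ) = (−1)^{λ_1+⋯+λ_{n−k}} (−1)^{mk} (−1)^{k(k−1)/2}` from the
determinantal formula. -/
def LSsign (m n k : ℕ) (lam : ℕ → ℕ) : ℤ :=
  (-1) ^ (∑ i ∈ Finset.range (n - k), lam (i + 1)) * (-1) ^ (m * k) *
    (-1) ^ (k * (k - 1) / 2)

/-- the Moens–Van der Jeugt block matrix. -/
def LSmat (k : ℕ) {n m : ℕ} (lam : ℕ → ℕ) (X : Fin n → F) (Y : Fin m → F) :
    Matrix (Fin (n + (m - k))) (Fin (n + (m - k))) F :=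
  Matrix.of fun r c =>
    if hr : (r : ℕ) < n then
      if hc : (c : ℕ) < m then (X ⟨(r : ℕ), hr⟩ - Y ⟨(c : ℕ), hc⟩)⁻¹
      else X ⟨(r : ℕ), hr⟩ ^
        ((lam ((c : ℕ) - m + 1) : ℤ) + (n : ℤ) - (m : ℤ) - (((c : ℕ) - m + 1 : ℕ) : ℤ))
    else
      if hc : (c : ℕ) < m then
        Y ⟨(c : ℕ), hc⟩ ^
          ((conjPart lam ((r : ℕ) - n + 1) : ℤ) + (m : ℤ) - (n : ℤ) - (((r : ℕ) - n + 1 : ℕ) : ℤ))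
      else 0

/-- the Littlewood–Schur function `LS_λ(−X; Y)`, defined by the determinantal
formula of Moens and Van der Jeugt: it is `0` if the `(m,n)`-index `k` of `λ` is
negative, and otherwise equals `ε(λ) · Δ(Y;X)/(Δ(X)Δ(Y)) · det M`. -/
def LS {n m : ℕ} (lam : ℕ → ℕ) (X : Fin n → F) (Y : Fin m → F) : F :=
  if indexOf m n lam < 0 then 0
  else (LSsign m n (indexOf m n lam).toNat lam : F) * vanPair Y X /
    (vanDet X * vanDet Y) * (LSmat (indexOf m n lam).toNat lam X Y).det

/-- `walkMu lam n I` is the partition with `i`-th part `λ_{V_i} + n + i − V_i`,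
where `V_1 < ⋯ < V_card(I)` is the increasing (1-based) enumeration of `I`. -/
def walkMu (lam : ℕ → ℕ) (n : ℕ) {N : ℕ} (I : Finset (Fin N)) : ℕ → ℕ :=
  pad fun i =>
    if h : 1 ≤ i ∧ i ≤ I.card then
      lam (((I.orderIsoOfFin rfl ⟨i - 1, by omega⟩).1 : ℕ) + 1) +
        (n + i - (((I.orderIsoOfFin rfl ⟨i - 1, by omega⟩).1 : ℕ) + 1))
    else 0

/-- `C_N(K)`: the set `{N − j + 1 : j ∈ {1,…,N} ∖ K}`. -/
def Cfin (N : ℕ) (K : Finset ℕ) : Finset ℕ :=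
  (Finset.Icc 1 N \ K).image (fun j => N + 1 - j)

/-- the subpartition `sub_N(λ, s)`: its `j`-th part is
`λ_{s_j} + (N − s_j) − (r − j)`, where `s_1 < ⋯ < s_r` are the elements of `s`. -/
def subPartF (N : ℕ) (lam : ℕ → ℕ) (s : Finset ℕ) : ℕ → ℕ :=
  pad fun j =>
    if h : 1 ≤ j ∧ j ≤ s.card then
      lam ((s.orderIsoOfFin rfl ⟨j - 1, by omega⟩).1) +
        (N - (s.orderIsoOfFin rfl ⟨j - 1, by omega⟩).1) - (s.card - j)
    else 0

end

/-- `α` is a quasi-partition associated to the subset with membership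
predicate `inV` (the complement being taken inside `{1, …, m+n}`). -/
def IsQuasiPartition (m n : ℕ) (inV : ℕ → Prop) (α : ℕ → ℤ) : Prop :=
  0 ≤ α (m + n) ∧
  (∀ i, 1 < i → i < m + n → ¬(α (i - 1) < α i ∧ α i < α (i + 1))) ∧
  (∀ i, 1 ≤ i → i < m + n → ((inV i ↔ inV (i + 1)) → α (i + 1) ≤ α i)) ∧
  (∀ i, 1 ≤ i → i < m + n → (¬(inV i ↔ inV (i + 1)) → α (i + 1) ≤ α i + 1))

/-- the integer sequence `α_1, …, α_N` is a partition: non-increasing and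
non-negative. -/
def IsPartitionSeqZ (N : ℕ) (α : ℕ → ℤ) : Prop :=
  (∀ i j, 1 ≤ i → i ≤ j → j ≤ N → α j ≤ α i) ∧ ∀ i, 1 ≤ i → i ≤ N → 0 ≤ α i

namespace OverlapAux

/-- `f` is non-increasing on indices `≥ 1`. -/
def Mono1 (f : ℕ → ℕ) : Prop := ∀ i j, 1 ≤ i → i ≤ j → f j ≤ f i

lemma conj_set_finite {f : ℕ → ℕ} (hfin : ∃ N, ∀ i, N ≤ i → f i = 0) {a : ℕ}
    (ha : 1 ≤ a) : {t : ℕ | 1 ≤ t ∧ a ≤ f t}.Finite := by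
  obtain ⟨N, hN⟩ := hfin
  refine (Set.finite_Icc 1 N).subset ?_
  rintro t ⟨h1, h2⟩
  refine ⟨h1, ?_⟩
  by_contra h
  have := hN t (by omega); omega

lemma galois1 {f : ℕ → ℕ} (hm : Mono1 f) (hfin : ∃ N, ∀ i, N ≤ i → f i = 0)
    {i j : ℕ} (hi : 1 ≤ i) (hj : 1 ≤ j) : j ≤ f i ↔ i ≤ conjPart f j := by
  have hSfin := conj_set_finite hfin hj
  constructor
  · intro h
    have hsub : Set.Icc 1 i ⊆ {t : ℕ | 1 ≤ t ∧ j ≤ f t} := by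
      rintro t ⟨ht1, hti⟩
      exact ⟨ht1, le_trans h (hm t i ht1 hti)⟩
    have hle := Set.ncard_le_ncard hsub hSfin
    have hicc : (Set.Icc 1 i).ncard = i := by
      rw [← Finset.coe_Icc, Set.ncard_coe_finset, Nat.card_Icc]; omega
    unfold conjPart
    omega
  · intro h
    by_contra hf
    have hsub : {t : ℕ | 1 ≤ t ∧ j ≤ f t} ⊆ Set.Icc 1 (i - 1) := by
      rintro t ⟨ht1, htj⟩
      refine ⟨ht1, ?_⟩
      by_contra hti
      exact hf (le_trans htj (hm i t hi (by omega)))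
    have hle := Set.ncard_le_ncard hsub (Set.finite_Icc _ _)
    have hicc : (Set.Icc 1 (i - 1)).ncard = i - 1 := by
      rw [← Finset.coe_Icc, Set.ncard_coe_finset, Nat.card_Icc]; omega
    unfold conjPart at h
    omega

lemma conjPart_le_of_LenLE {f : ℕ → ℕ} {n j : ℕ} (hlen : LenLE f n) (hj : 1 ≤ j) :
    conjPart f j ≤ n := by
  unfold conjPart
  have hsub : {t : ℕ | 1 ≤ t ∧ j ≤ f t} ⊆ Set.Icc 1 n := by
    rintro t ⟨h1, h2⟩
    refine ⟨h1, ?_⟩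
    by_contra h
    have := hlen t (by omega); omega
  have hle := Set.ncard_le_ncard hsub (Set.finite_Icc _ _)
  have hicc : (Set.Icc 1 n).ncard = n := by
    rw [← Finset.coe_Icc, Set.ncard_coe_finset, Nat.card_Icc]; omega
  omega

lemma conjPart_antitone {f : ℕ → ℕ} (hfin : ∃ N, ∀ i, N ≤ i → f i = 0)
    {a b : ℕ} (ha : 1 ≤ a) (hab : a ≤ b) : conjPart f b ≤ conjPart f a := by
  unfold conjPart
  exact Set.ncard_le_ncard (fun t ⟨h1, h2⟩ => ⟨h1, le_trans hab h2⟩)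
    (conj_set_finite hfin ha)

lemma conjPart_eq_of_iff {f : ℕ → ℕ} {j K : ℕ}
    (h : ∀ t, 1 ≤ t → (j ≤ f t ↔ t ≤ K)) : conjPart f j = K := by
  unfold conjPart
  have hset : {t : ℕ | 1 ≤ t ∧ j ≤ f t} = Set.Icc 1 K := by
    ext t
    simp only [Set.mem_setOf_eq, Set.mem_Icc]
    constructor
    · rintro ⟨h1, h2⟩; exact ⟨h1, (h t h1).1 h2⟩
    · rintro ⟨h1, h2⟩; exact ⟨h1, (h t h1).2 h2⟩
  rw [hset, ← Finset.coe_Icc, Set.ncard_coe_finset, Nat.card_Icc]; omega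

lemma no_collision {f : ℕ → ℕ} (hm : Mono1 f) (hfin : ∃ N, ∀ i, N ≤ i → f i = 0)
    {i j : ℕ} (hi : 1 ≤ i) (hj : 1 ≤ j) : f i + conjPart f j + 1 ≠ i + j := by
  by_cases h : j ≤ f i
  · have := (galois1 hm hfin hi hj).mp h; omega
  · have h2 : ¬ i ≤ conjPart f j := fun hh => h ((galois1 hm hfin hi hj).mpr hh)
    omega

lemma multiset_eq_range {s : Multiset ℕ} {N : ℕ} (hnd : s.Nodup)
    (hmem : ∀ a ∈ s, a < N) (hcard : Multiset.card s = N) : s = Multiset.range N := by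
  refine Multiset.eq_of_le_of_card_le ?_ (by simp [hcard])
  rw [Multiset.le_iff_count]
  intro a
  by_cases ha : a ∈ s
  · have h1 : Multiset.count a s ≤ 1 := Multiset.nodup_iff_count_le_one.mp hnd a
    have h2 : a ∈ Multiset.range N := Multiset.mem_range.mpr (hmem a ha)
    have h3 := Multiset.count_pos.mpr h2
    omega
  · simp [Multiset.count_eq_zero.mpr ha]

lemma mem_hooks {f : ℕ → ℕ} {n a : ℕ} :
    a ∈ hooks n f ↔ ∃ i, 1 ≤ i ∧ i ≤ n ∧ f i + n = a + i := by
  unfold hooks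
  simp only [Multiset.mem_map, Multiset.mem_range]
  constructor
  · rintro ⟨i, hi, rfl⟩
    exact ⟨i + 1, by omega, by omega, (Nat.sub_add_cancel (by omega)).symm⟩
  · rintro ⟨i, h1, h2, h3⟩
    refine ⟨i - 1, by omega, ?_⟩
    have hii : i - 1 + 1 = i := by omega
    rw [hii]
    omega

lemma hooks_nodup {f : ℕ → ℕ} {n : ℕ} (hm : Mono1 f) : (hooks n f).Nodup := by
  refine Multiset.Nodup.map_on ?_ (Multiset.nodup_range n)
  intro x hx y hy hxy
  rw [Multiset.mem_range] at hx hy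
  have hx1 : f (x + 1) + n - (x + 1) + (x + 1) = f (x + 1) + n :=
    Nat.sub_add_cancel (by omega)
  have hy1 : f (y + 1) + n - (y + 1) + (y + 1) = f (y + 1) + n :=
    Nat.sub_add_cancel (by omega)
  rcases lt_trichotomy x y with h | h | h
  · have := hm (x + 1) (y + 1) (by omega) (by omega); omega
  · exact h
  · have := hm (y + 1) (x + 1) (by omega) (by omega); omega

lemma hooks_zero (N : ℕ) : hooks N (fun _ => 0) = Multiset.range N := by
  refine multiset_eq_range ?_ ?_ (by simp [hooks])
  · refine Multiset.Nodup.map_on ?_ (Multiset.nodup_range N)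
    intro x hx y hy h
    rw [Multiset.mem_range] at hx hy
    have h' : 0 + N - (x + 1) = 0 + N - (y + 1) := h
    omega
  · intro a ha
    obtain ⟨i, hi, rfl⟩ := Multiset.mem_map.mp ha
    rw [Multiset.mem_range] at hi
    show 0 + N - (i + 1) < N
    omega

lemma compl_hooks {m n : ℕ} {mu nu : ℕ → ℕ}
    (hmuM : Mono1 mu) (hnuM : Mono1 nu) (hnufin : ∃ N, ∀ i, N ≤ i → nu i = 0)
    (hmu1 : mu 1 ≤ n) (hnu1 : nu 1 ≤ m)
    (hc : ∀ i, 1 ≤ i → i ≤ m → conjPart nu i = n - mu (m + 1 - i)) :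
    hooks m mu + hooks n nu = Multiset.range (m + n) := by
  have hmub : ∀ i, 1 ≤ i → mu i ≤ n := fun i hi => le_trans (hmuM 1 i le_rfl hi) hmu1
  have hnub : ∀ j, 1 ≤ j → nu j ≤ m := fun j hj => le_trans (hnuM 1 j le_rfl hj) hnu1
  have hdisj : Disjoint (hooks m mu) (hooks n nu) := by
    rw [Multiset.disjoint_left]
    rintro a ha hb
    obtain ⟨i, hi1, hi2, hi3⟩ := mem_hooks.mp ha
    obtain ⟨j, hj1, hj2, hj3⟩ := mem_hooks.mp hb
    have hc' := hc (m + 1 - i) (by omega) (by omega)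
    have hii : m + 1 - (m + 1 - i) = i := by omega
    rw [hii] at hc'
    have hnc := no_collision hnuM hnufin hj1 (show 1 ≤ m + 1 - i by omega)
    have := hmub i hi1
    omega
  refine multiset_eq_range ?_ ?_ ?_
  · exact Multiset.nodup_add.mpr ⟨hooks_nodup hmuM, hooks_nodup hnuM, hdisj⟩
  · intro a ha
    rcases Multiset.mem_add.mp ha with h | h
    · obtain ⟨i, h1, h2, h3⟩ := mem_hooks.mp h
      have := hmub i h1; omega
    · obtain ⟨j, h1, h2, h3⟩ := mem_hooks.mp h
      have := hnub j h1; omega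
  · simp [hooks]

/-- the complement-conjugate `(m - μ'_n, …, m - μ'_1)` candidate partition. -/
noncomputable def complConj (m n : ℕ) (mu : ℕ → ℕ) : ℕ → ℕ :=
  fun j => if 1 ≤ j ∧ j ≤ n then m - conjPart mu (n + 1 - j) else 0

lemma complConj_mono {m n : ℕ} {mu : ℕ → ℕ} (hfin : ∃ N, ∀ i, N ≤ i → mu i = 0) :
    Mono1 (complConj m n mu) := by
  intro i j hi hij
  unfold complConj
  by_cases hjn : j ≤ n
  · rw [if_pos ⟨le_trans hi hij, hjn⟩, if_pos ⟨hi, by omega⟩]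
    have := conjPart_antitone hfin (show 1 ≤ n + 1 - j by omega)
      (show n + 1 - j ≤ n + 1 - i by omega)
    omega
  · rw [if_neg (by omega)]
    exact Nat.zero_le _

lemma conjPart_complConj {m n : ℕ} {mu : ℕ → ℕ} (hmuM : Mono1 mu)
    (hmufin : ∃ N, ∀ i, N ≤ i → mu i = 0) (hmul : LenLE mu m) (hmu1 : mu 1 ≤ n)
    {t : ℕ} (ht1 : 1 ≤ t) (htm : t ≤ m) :
    conjPart (complConj m n mu) t = n - mu (m + 1 - t) := by
  refine conjPart_eq_of_iff ?_
  intro j hj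
  unfold complConj
  have hmub : mu (m + 1 - t) ≤ n := le_trans (hmuM 1 _ le_rfl (by omega)) hmu1
  by_cases hjn : j ≤ n
  · rw [if_pos ⟨hj, hjn⟩]
    have hcle : conjPart mu (n + 1 - j) ≤ m := conjPart_le_of_LenLE hmul (by omega)
    have hgal := galois1 hmuM hmufin (show 1 ≤ m + 1 - t by omega)
      (show 1 ≤ n + 1 - j by omega)
    constructor
    · intro h
      by_contra hcon
      have := hgal.mp (by omega)
      omega
    · intro h
      have hno : ¬ (m + 1 - t ≤ conjPart mu (n + 1 - j)) := fun hh => by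
        have := hgal.mpr hh; omega
      omega
  · rw [if_neg (by omega)]
    constructor
    · intro h; omega
    · intro h; omega

end OverlapAux

open OverlapAux

/-- **Two partitions do not overlap precisely when they are complementary**:
for `μ ⊂ ⟨n^m⟩` and `l(ν) ≤ n`, the `(m,n)`-overlap of `μ` and `ν` is the empty
partition iff `ν_1 ≤ m` and `ν'_i = n − μ_{m+1−i}` for all `1 ≤ i ≤ m`. -/
theorem overlap_empty_iff_complement
    {m n : ℕ} (mu nu : ℕ → ℕ) (hmu : IsPartition mu) (hnu : IsPartition nu)
    (hmul : LenLE mu m) (hmu1 : mu 1 ≤ n) (hnul : LenLE nu n) :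
    IsOverlap m n mu nu (fun _ => 0) ↔
      (nu 1 ≤ m ∧ ∀ i, 1 ≤ i → i ≤ m → conjPart nu i = n - mu (m + 1 - i)) := by
  have hmuM : Mono1 mu := fun i j _ h => hmu.2.1 i j h
  have hnuM : Mono1 nu := fun i j _ h => hnu.2.1 i j h
  constructor
  · rintro ⟨-, heq⟩
    rw [hooks_zero] at heq
    set nus := complConj m n mu with hnus
    have hnusM : Mono1 nus := complConj_mono hmu.2.2
    have hnusfin : ∃ N, ∀ i, N ≤ i → nus i = 0 :=
      ⟨n + 1, fun i hi => by rw [hnus]; unfold complConj; rw [if_neg (by omega)]⟩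
    have hnus1 : nus 1 ≤ m := by
      rw [hnus]; unfold complConj; split <;> omega
    have hcnus : ∀ i, 1 ≤ i → i ≤ m → conjPart nus i = n - mu (m + 1 - i) :=
      fun i h1 h2 => conjPart_complConj hmuM hmu.2.2 hmul hmu1 h1 h2
    have h2 := compl_hooks hmuM hnusM hnusfin hmu1 hnus1 hcnus
    have hB2 : hooks n nu = hooks n nus := by
      have h3 : hooks m mu + hooks n nu = hooks m mu + hooks n nus :=
        heq.symm.trans h2.symm
      exact add_left_cancel h3
    -- pointwise equality nu = nus on [1, n]
    have hsort : ∀ f : ℕ → ℕ, Mono1 f → List.Pairwise (· ≥ ·)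
        ((List.range n).map (fun i => f (i + 1) + n - (i + 1))) := by
      intro f hmf
      rw [List.pairwise_map]
      refine List.Pairwise.imp_of_mem ?_ (List.pairwise_lt_range (n := n))
      intro a b ha hb hab
      rw [List.mem_range] at ha hb
      have e1 : f (a + 1) + n - (a + 1) + (a + 1) = f (a + 1) + n :=
        Nat.sub_add_cancel (by omega)
      have e2 : f (b + 1) + n - (b + 1) + (b + 1) = f (b + 1) + n :=
        Nat.sub_add_cancel (by omega)
      have := hmf (a + 1) (b + 1) (by omega) (by omega)
      simp only [ge_iff_le]
      omega
    have hperm : List.Perm ((List.range n).map (fun i => nu (i + 1) + n - (i + 1)))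
        ((List.range n).map (fun i => nus (i + 1) + n - (i + 1))) :=
      Multiset.coe_eq_coe.mp hB2
    haveI : IsAntisymm ℕ (· ≥ ·) := ⟨fun a b h1 h2 => le_antisymm h2 h1⟩
    have hlist := List.Perm.eq_of_pairwise (fun a b _ _ h1 h2 => le_antisymm h2 h1) (hsort nu hnuM) (hsort nus hnusM) hperm
    have hpt : ∀ j, 1 ≤ j → j ≤ n → nu j = nus j := by
      intro j h1 h2
      have hmem : j - 1 ∈ List.range n := List.mem_range.mpr (by omega)
      have := List.map_inj_left.mp hlist (j - 1) hmem
      have hjj : j - 1 + 1 = j := by omega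
      rw [hjj] at this
      omega
    have hptall : ∀ j, 1 ≤ j → nu j = nus j := by
      intro j h1
      by_cases hjn : j ≤ n
      · exact hpt j h1 hjn
      · rw [hnul j (by omega), hnus]
        unfold complConj
        rw [if_neg (by omega)]
    constructor
    · rcases Nat.eq_zero_or_pos n with hn | hn
      · have := hnul 1 (by omega); omega
      · rw [hpt 1 le_rfl hn]; exact hnus1
    · intro i h1 h2
      have hconj : conjPart nu i = conjPart nus i := by
        unfold conjPart
        congr 1
        ext t
        simp only [Set.mem_setOf_eq]
        constructor
        · rintro ⟨ht1, ht2⟩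
          exact ⟨ht1, by rw [← hptall t ht1]; exact ht2⟩
        · rintro ⟨ht1, ht2⟩
          exact ⟨ht1, by rw [hptall t ht1]; exact ht2⟩
      rw [hconj]
      exact hcnus i h1 h2
  · rintro ⟨hnu1, hc⟩
    refine ⟨fun i _ => rfl, ?_⟩
    rw [hooks_zero]
    exact (compl_hooks hmuM hnuM hnu.2.2 hmu1 hnu1 hc).symm
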